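/- Let A be a differential graded algebra over F_2 with differential δ and multiplication μ, let M be a right differential graded module over A with differential m_1, and let (χ, δ¹) be a type D structure over A. Then the F_2-linear map d : M ⊗ χ → M ⊗ χ defined by d(x ⊗ y) = m_1(x) ⊗ y + (ρ ⊗ id_χ)(x ⊗ δ¹(y)), where ρ : M ⊗ A → M is the right action, satisfies d ∘ d = 0; that is, the box tensor product M ⊠ χ is a chain complex. -/
import Mathlib


open TensorProduct LinearMap

/-- Let `A` be a differential graded algebra over `F_2` with differential
`δ` and multiplication `μ`, let `M` be a right differential graded module over `A` with
differential `m_1` and right action `ρ : M ⊗ A → M`, and let `(χ, δ¹)` be a type `D`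
structure over `A`, i.e. `δ₁ : χ → A ⊗ χ` satisfies
`(μ ⊗ id_χ) ∘ (id_A ⊗ δ¹) ∘ δ¹ + (δ ⊗ id_χ) ∘ δ¹ = 0`
(with the implicit associator `A ⊗ (A ⊗ χ) ≅ (A ⊗ A) ⊗ χ` made explicit).
Then the `F_2`-linear map `d : M ⊗ χ → M ⊗ χ` defined by
`d(x ⊗ y) = m_1(x) ⊗ y + (ρ ⊗ id_χ)(x ⊗ δ¹(y))`
satisfies `d ∘ d = 0`; that is, the box tensor product `M ⊠ χ` is a chain complex. -/
theorem statement9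
    (A : Type*) [Ring A] [Algebra (ZMod 2) A]
    (δ : A →ₗ[ZMod 2] A)
    (hδδ : ∀ a : A, δ (δ a) = 0)
    (hLeibniz : ∀ a b : A, δ (a * b) = δ a * b + a * δ b)
    (M : Type*) [AddCommGroup M] [Module (ZMod 2) M]
    -- the right action `ρ : M ⊗ A → M`:
    (ρ : M ⊗[ZMod 2] A →ₗ[ZMod 2] M)
    (hρ_assoc : ∀ (x : M) (a b : A),
      ρ (ρ (x ⊗ₜ[ZMod 2] a) ⊗ₜ[ZMod 2] b) = ρ (x ⊗ₜ[ZMod 2] (a * b)))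
    (hρ_one : ∀ x : M, ρ (x ⊗ₜ[ZMod 2] (1 : A)) = x)
    -- the differential `m_1` on `M`, squaring to zero and satisfying the Leibniz rule:
    (m₁ : M →ₗ[ZMod 2] M)
    (hm₁m₁ : ∀ x : M, m₁ (m₁ x) = 0)
    (hm₁Leibniz : ∀ (x : M) (a : A),
      m₁ (ρ (x ⊗ₜ[ZMod 2] a)) = ρ (m₁ x ⊗ₜ[ZMod 2] a) + ρ (x ⊗ₜ[ZMod 2] δ a))
    -- the type `D` structure `(χ, δ¹)`:
    (χ : Type*) [AddCommGroup χ] [Module (ZMod 2) χ]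
    (δ₁ : χ →ₗ[ZMod 2] A ⊗[ZMod 2] χ)
    (hD : (LinearMap.rTensor χ (LinearMap.mul' (ZMod 2) A)) ∘ₗ
            (TensorProduct.assoc (ZMod 2) A A χ).symm.toLinearMap ∘ₗ
            (LinearMap.lTensor A δ₁) ∘ₗ δ₁
          + (LinearMap.rTensor χ δ) ∘ₗ δ₁ = 0)
    -- the differential `d` on `M ⊗ χ`:
    (d : M ⊗[ZMod 2] χ →ₗ[ZMod 2] M ⊗[ZMod 2] χ)
    (hd : ∀ (x : M) (y : χ),
      d (x ⊗ₜ[ZMod 2] y)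
        = m₁ x ⊗ₜ[ZMod 2] y
          + (LinearMap.rTensor χ ρ)
              ((TensorProduct.assoc (ZMod 2) M A χ).symm (x ⊗ₜ[ZMod 2] δ₁ y))) :
    d ∘ₗ d = 0 := by
  -- abbreviation for `(ρ ⊗ id) ∘ assoc⁻¹`
  set D : M ⊗[ZMod 2] (A ⊗[ZMod 2] χ) →ₗ[ZMod 2] M ⊗[ZMod 2] χ :=
    (LinearMap.rTensor χ ρ) ∘ₗ (TensorProduct.assoc (ZMod 2) M A χ).symm.toLinearMap
    with hDdef
  have hDtmul : ∀ (x : M) (a : A) (z : χ),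
      D (x ⊗ₜ[ZMod 2] (a ⊗ₜ[ZMod 2] z)) = ρ (x ⊗ₜ[ZMod 2] a) ⊗ₜ[ZMod 2] z := by
    intro x a z
    simp [hDdef]
  have hchar : ∀ m : M ⊗[ZMod 2] χ, m + m = 0 := by
    intro m
    have h2 : ((2 : ZMod 2)) • m = m + m := two_smul _ m
    rw [← h2, show ((2 : ZMod 2)) = 0 from rfl, zero_smul]
  -- the "action-associativity" lemma, extended by linearity
  have hassoc : ∀ (x : M) (a : A) (s : A ⊗[ZMod 2] χ),
      D (ρ (x ⊗ₜ[ZMod 2] a) ⊗ₜ[ZMod 2] s)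
        = D (x ⊗ₜ[ZMod 2] ((LinearMap.rTensor χ (LinearMap.mul' (ZMod 2) A))
            ((TensorProduct.assoc (ZMod 2) A A χ).symm (a ⊗ₜ[ZMod 2] s)))) := by
    intro x a s
    induction s using TensorProduct.induction_on with
    | zero => simp
    | tmul b z => simp [hDtmul, hρ_assoc]
    | add s t ihs iht =>
        simp only [TensorProduct.tmul_add, map_add] at *
        rw [ihs, iht]
  -- key computation of `d ∘ D`
  have key : ∀ (x : M) (t : A ⊗[ZMod 2] χ),
      d (D (x ⊗ₜ[ZMod 2] t))
        = D (m₁ x ⊗ₜ[ZMod 2] t)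
          + D (x ⊗ₜ[ZMod 2] ((LinearMap.rTensor χ δ) t))
          + D (x ⊗ₜ[ZMod 2] ((LinearMap.rTensor χ (LinearMap.mul' (ZMod 2) A))
              ((TensorProduct.assoc (ZMod 2) A A χ).symm ((LinearMap.lTensor A δ₁) t)))) := by
    intro x t
    induction t using TensorProduct.induction_on with
    | zero => simp
    | tmul a z =>
        rw [hDtmul, hd, hm₁Leibniz,
          show ((LinearMap.rTensor χ ρ) ((TensorProduct.assoc (ZMod 2) M A χ).symm
              (ρ (x ⊗ₜ[ZMod 2] a) ⊗ₜ[ZMod 2] δ₁ z)) = D (ρ (x ⊗ₜ[ZMod 2] a) ⊗ₜ[ZMod 2] δ₁ z))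
            from rfl,
          hassoc]
        simp only [LinearMap.rTensor_tmul, LinearMap.lTensor_tmul, hDtmul,
          TensorProduct.add_tmul]
    | add s t ihs iht =>
        simp only [TensorProduct.tmul_add, map_add] at *
        rw [ihs, iht]
        abel
  -- the type D structure equation, pointwise
  have hDy : ∀ y : χ,
      (LinearMap.rTensor χ (LinearMap.mul' (ZMod 2) A))
          ((TensorProduct.assoc (ZMod 2) A A χ).symm ((LinearMap.lTensor A δ₁) (δ₁ y)))
        + (LinearMap.rTensor χ δ) (δ₁ y) = 0 := by
    intro y
    have := LinearMap.congr_fun hD y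
    simpa using this
  apply TensorProduct.ext'
  intro x y
  simp only [LinearMap.coe_comp, Function.comp_apply, LinearMap.zero_apply]
  have h1 : d (x ⊗ₜ[ZMod 2] y) = m₁ x ⊗ₜ[ZMod 2] y + D (x ⊗ₜ[ZMod 2] δ₁ y) := by
    rw [hd, hDdef]; rfl
  rw [h1, map_add]
  have h2 : d (m₁ x ⊗ₜ[ZMod 2] y) = D (m₁ x ⊗ₜ[ZMod 2] δ₁ y) := by
    rw [hd, hm₁m₁, TensorProduct.zero_tmul, zero_add, hDdef]; rfl
  rw [h2, key x (δ₁ y)]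
  have h3 : D (x ⊗ₜ[ZMod 2] ((LinearMap.rTensor χ δ) (δ₁ y)))
      + D (x ⊗ₜ[ZMod 2] ((LinearMap.rTensor χ (LinearMap.mul' (ZMod 2) A))
          ((TensorProduct.assoc (ZMod 2) A A χ).symm ((LinearMap.lTensor A δ₁) (δ₁ y)))))
      = 0 := by
    rw [← map_add, ← TensorProduct.tmul_add, add_comm, hDy, TensorProduct.tmul_zero, map_zero]
  calc D (m₁ x ⊗ₜ[ZMod 2] δ₁ y)
      + (D (m₁ x ⊗ₜ[ZMod 2] δ₁ y)
        + D (x ⊗ₜ[ZMod 2] ((LinearMap.rTensor χ δ) (δ₁ y)))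
        + D (x ⊗ₜ[ZMod 2] ((LinearMap.rTensor χ (LinearMap.mul' (ZMod 2) A))
            ((TensorProduct.assoc (ZMod 2) A A χ).symm ((LinearMap.lTensor A δ₁) (δ₁ y))))))
      = (D (m₁ x ⊗ₜ[ZMod 2] δ₁ y) + D (m₁ x ⊗ₜ[ZMod 2] δ₁ y))
        + (D (x ⊗ₜ[ZMod 2] ((LinearMap.rTensor χ δ) (δ₁ y)))
          + D (x ⊗ₜ[ZMod 2] ((LinearMap.rTensor χ (LinearMap.mul' (ZMod 2) A))
              ((TensorProduct.assoc (ZMod 2) A A χ).symm ((LinearMap.lTensor A δ₁) (δ₁ y)))))) := by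
        abel
    _ = 0 := by rw [hchar, h3, add_zero]
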